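/- For b ∈ (−1,1) let f_b : ℝ → ℝ be the 2π-periodic smooth function f_b(t) = sin(t)·(1 + b·sin(t)); its zeros in [0,2π) are 0 and π and they are simple. Then the map b ↦ μ(X_{f_b,2π}) = lim_{ε→0⁺} ( ∫_ε^{π−ε} dt/f_b(t) + ∫_{π+ε}^{2π−ε} dt/f_b(t) ) is a surjection from (−1,1) onto ℝ: for every r ∈ ℝ there exists b ∈ (−1,1) with μ(X_{f_b,2π}) = r. -/

import Mathlib

open Set Filter Real intervalIntegral

section aux

variable {b : ℝ} (hb : |b| < 1)

lemma denom_pos (hb : |b| < 1) (t : ℝ) : 0 < 1 + b * Real.sin t := by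
  obtain ⟨h1, h2⟩ := abs_lt.mp hb
  nlinarith [Real.neg_one_le_sin t, Real.sin_le_one t, mul_nonneg (by linarith : (0:ℝ) ≤ 1 + b) (by linarith [Real.neg_one_le_sin t] : (0:ℝ) ≤ 1 + Real.sin t), mul_nonneg (by linarith : (0:ℝ) ≤ 1 - b) (by linarith [Real.sin_le_one t] : (0:ℝ) ≤ 1 - Real.sin t)]

lemma cont_g (hb : |b| < 1) : Continuous (fun t => b / (1 + b * Real.sin t)) :=
  continuous_const.div (by continuity) (fun t => (denom_pos hb t).ne')

-- partial fractions
lemma partial_frac (hb : |b| < 1) {t : ℝ} (ht : Real.sin t ≠ 0) :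
    1 / (Real.sin t * (1 + b * Real.sin t)) =
      1 / Real.sin t - b / (1 + b * Real.sin t) := by
  have h := (denom_pos hb t).ne'
  have h' : 1 + Real.sin t * b ≠ 0 := by rwa [mul_comm] at h
  field_simp
  ring

end aux

section deriv
variable {b : ℝ}

lemma hasDerivAt_A (hb : |b| < 1) {t : ℝ} (ht : t ∈ Ioo (-π) π) :
    HasDerivAt (fun s => (2 / Real.sqrt (1 - b^2)) *
        Real.arctan ((b + Real.tan (s/2)) / Real.sqrt (1 - b^2)))
      (1 / (1 + b * Real.sin t)) t := by
  set c := Real.sqrt (1 - b^2) with hcdef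
  have hb2 : b^2 < 1 := by
    obtain ⟨h1, h2⟩ := abs_lt.mp hb; nlinarith
  have hcpos : 0 < c := Real.sqrt_pos.mpr (by linarith)
  have hc2 : c^2 = 1 - b^2 := Real.sq_sqrt (by linarith)
  have hcos : Real.cos (t/2) ≠ 0 := by
    have : 0 < Real.cos (t/2) := by
      apply Real.cos_pos_of_mem_Ioo
      constructor <;> [linarith [ht.1]; linarith [ht.2]]
    exact this.ne'
  have h1 : HasDerivAt (fun s : ℝ => Real.tan (s/2)) (1 / Real.cos (t/2)^2 * (1/2)) t := by
    have := (Real.hasDerivAt_tan hcos).comp t ((hasDerivAt_id t).div_const 2)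
    simpa [Function.comp_def] using this
  have h2 : HasDerivAt (fun s : ℝ => (b + Real.tan (s/2)) / c)
      ((1 / Real.cos (t/2)^2 * (1/2)) / c) t := (h1.const_add b).div_const c
  have h3 := ((Real.hasDerivAt_arctan ((b + Real.tan (t/2)) / c)).comp t h2).const_mul (2 / c)
  refine h3.congr_deriv ?_
  have hden := (denom_pos hb t).ne'
  have htan : Real.tan (t/2) = Real.sin (t/2) / Real.cos (t/2) := Real.tan_eq_sin_div_cos _
  have hsin : Real.sin t = 2 * Real.sin (t/2) * Real.cos (t/2) := by
    have h := Real.sin_two_mul (t/2)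
    rwa [show 2*(t/2) = t by ring] at h
  have hpyth : Real.sin (t/2)^2 + Real.cos (t/2)^2 = 1 := Real.sin_sq_add_cos_sq _
  set s := Real.sin (t/2) with hs
  set k := Real.cos (t/2) with hk
  have key : (1 + ((b + s/k) / c)^2) * (k^2 * c^2) = 1 + b * Real.sin t := by
    rw [hsin]
    have expand : (1 + ((b + s/k) / c)^2) * (k^2 * c^2) = k^2*c^2 + (b*k+s)^2 := by
      field_simp
    rw [expand]
    linear_combination k^2 * hc2 + hpyth
  have hv : (0:ℝ) < 1 + ((b + s / k) / c)^2 := by positivity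
  rw [htan]
  rw [show (2:ℝ)/c * (1 / (1 + ((b + s/k) / c)^2) *
      (1 / k^2 * (1/2) / c)) =
      1 / ((1 + ((b + s/k) / c)^2) * (k^2 * c^2)) by
    field_simp]
  rw [key]

end deriv

section intformula
variable {b : ℝ}

lemma integral_one_div_one_add_b_sin (hb : |b| < 1) :
    ∫ t in (-π)..π, 1 / (1 + b * Real.sin t) = 2 * π / Real.sqrt (1 - b^2) := by
  set c := Real.sqrt (1 - b^2) with hcdef
  have hb2 : b^2 < 1 := by obtain ⟨h1, h2⟩ := abs_lt.mp hb; nlinarith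
  have hcpos : 0 < c := Real.sqrt_pos.mpr (by linarith)
  have hcont : Continuous (fun t => 1 / (1 + b * Real.sin t)) :=
    continuous_const.div (by continuity) (fun t => (denom_pos hb t).ne')
  set A : ℝ → ℝ := fun s => (2 / c) * Real.arctan ((b + Real.tan (s/2)) / c) with hA
  -- FTC on subintervals
  have hFTC : ∀ δ ∈ Ioo (0:ℝ) π,
      ∫ t in (-π + δ)..(π - δ), 1 / (1 + b * Real.sin t) = A (π - δ) - A (-π + δ) := by
    intro δ hδ
    apply intervalIntegral.integral_eq_sub_of_hasDerivAt
    · intro t ht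
      rw [uIcc_of_le (by linarith [hδ.1, hδ.2, Real.pi_pos] : -π + δ ≤ π - δ)] at ht
      exact hasDerivAt_A hb ⟨by linarith [ht.1, hδ.1], by linarith [ht.2, hδ.1]⟩
    · exact (hcont.intervalIntegrable _ _)
  -- limit of LHS
  have hL : Tendsto (fun δ : ℝ => ∫ t in (-π + δ)..(π - δ), 1 / (1 + b * Real.sin t))
      (nhdsWithin 0 (Ioi 0)) (nhds (∫ t in (-π)..π, 1 / (1 + b * Real.sin t))) := by
    have hprim : Continuous (fun x => ∫ t in (-π)..x, 1 / (1 + b * Real.sin t)) :=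
      intervalIntegral.continuous_primitive (fun a b => hcont.intervalIntegrable a b) _
    have heq : ∀ δ : ℝ, ∫ t in (-π + δ)..(π - δ), 1 / (1 + b * Real.sin t)
        = (∫ t in (-π)..(π - δ), 1 / (1 + b * Real.sin t))
          - ∫ t in (-π)..(-π + δ), 1 / (1 + b * Real.sin t) := by
      intro δ
      rw [intervalIntegral.integral_interval_sub_left (hcont.intervalIntegrable _ _)
        (hcont.intervalIntegrable _ _)]
    simp only [heq]
    have h1 : Tendsto (fun δ : ℝ => (∫ t in (-π)..(π - δ), 1 / (1 + b * Real.sin t))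
        - ∫ t in (-π)..(-π + δ), 1 / (1 + b * Real.sin t)) (nhds 0)
        (nhds ((∫ t in (-π)..(π - 0), 1 / (1 + b * Real.sin t))
          - ∫ t in (-π)..(-π + 0), 1 / (1 + b * Real.sin t))) := by
      apply Continuous.tendsto
      exact (hprim.comp (by continuity)).sub (hprim.comp (by continuity))
    simp only [sub_zero, add_zero, intervalIntegral.integral_same] at h1
    simpa using h1.mono_left nhdsWithin_le_nhds
  -- limit of RHS
  have hR : Tendsto (fun δ : ℝ => A (π - δ) - A (-π + δ)) (nhdsWithin 0 (Ioi 0))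
      (nhds (2 * π / c)) := by
    have htop : Tendsto (fun δ : ℝ => (b + Real.tan ((π - δ)/2)) / c)
        (nhdsWithin 0 (Ioi 0)) atTop := by
      apply Tendsto.atTop_div_const hcpos
      apply tendsto_atTop_add_const_left
      apply Real.tendsto_tan_pi_div_two.comp
      rw [tendsto_nhdsWithin_iff]
      constructor
      · apply Tendsto.mono_left _ nhdsWithin_le_nhds
        have : Tendsto (fun δ : ℝ => (π - δ)/2) (nhds 0) (nhds ((π - 0)/2)) := by
          apply Continuous.tendsto; continuity
        simpa using this
      · filter_upwards [self_mem_nhdsWithin] with δ (hδ : δ ∈ Ioi 0)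
        simp only [mem_Iio]
        linarith [mem_Ioi.mp hδ]
    have hbot : Tendsto (fun δ : ℝ => (b + Real.tan ((-π + δ)/2)) / c)
        (nhdsWithin 0 (Ioi 0)) atBot := by
      apply Tendsto.atBot_div_const hcpos
      apply tendsto_atBot_add_const_left
      apply Real.tendsto_tan_neg_pi_div_two.comp
      rw [tendsto_nhdsWithin_iff]
      constructor
      · apply Tendsto.mono_left _ nhdsWithin_le_nhds
        have : Tendsto (fun δ : ℝ => (-π + δ)/2) (nhds 0) (nhds ((-π + 0)/2)) := by
          apply Continuous.tendsto; continuity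
        simpa [neg_div] using this
      · filter_upwards [self_mem_nhdsWithin] with δ (hδ : δ ∈ Ioi 0)
        simp only [mem_Ioi]
        linarith [mem_Ioi.mp hδ]
    have harctan1 : Tendsto (fun δ : ℝ => Real.arctan ((b + Real.tan ((π - δ)/2)) / c))
        (nhdsWithin 0 (Ioi 0)) (nhds (π/2)) :=
      (Real.tendsto_arctan_atTop.mono_right nhdsWithin_le_nhds).comp htop
    have harctan2 : Tendsto (fun δ : ℝ => Real.arctan ((b + Real.tan ((-π + δ)/2)) / c))
        (nhdsWithin 0 (Ioi 0)) (nhds (-(π/2))) :=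
      (Real.tendsto_arctan_atBot.mono_right nhdsWithin_le_nhds).comp hbot
    have := ((harctan1.const_mul (2/c)).sub (harctan2.const_mul (2/c)))
    convert this using 2
    field_simp
    ring
  -- conclude
  have hev : (fun δ : ℝ => ∫ t in (-π + δ)..(π - δ), 1 / (1 + b * Real.sin t))
      =ᶠ[nhdsWithin 0 (Ioi 0)] (fun δ => A (π - δ) - A (-π + δ)) := by
    filter_upwards [Ioo_mem_nhdsGT_of_mem (by constructor <;> [rfl; exact Real.pi_pos] :
      (0:ℝ) ∈ Ico 0 π)] with δ hδ
    exact hFTC δ hδ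
  exact tendsto_nhds_unique (hL.congr' hev) hR

end intformula

section maincomp
variable {b : ℝ}

lemma integral_g (hb : |b| < 1) :
    ∫ t in (0:ℝ)..(2*π), b / (1 + b * Real.sin t) = 2 * π * b / Real.sqrt (1 - b^2) := by
  have hper : Function.Periodic (fun t => 1 / (1 + b * Real.sin t)) (2*π) := by
    intro t
    simp [Real.sin_periodic t]
  have shift := hper.intervalIntegral_add_eq 0 (-π)
  have hb1 : ∫ t in (0:ℝ)..(2*π), b / (1 + b * Real.sin t)
      = b * ∫ t in (0:ℝ)..(2*π), 1 / (1 + b * Real.sin t) := by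
    rw [← intervalIntegral.integral_const_mul]
    apply intervalIntegral.integral_congr
    intro t _
    show b / (1 + b * Real.sin t) = b * (1 / (1 + b * Real.sin t))
    rw [mul_one_div]
  rw [hb1]
  rw [show (0:ℝ) + 2*π = 2*π by ring, show -π + 2*π = π by ring] at shift
  rw [shift, integral_one_div_one_add_b_sin hb]
  ring

lemma sum_eq (hb : |b| < 1) {ε : ℝ} (hε : ε ∈ Ioo 0 (π/2)) :
    (∫ t in ε..(π - ε), 1 / (Real.sin t * (1 + b * Real.sin t))) +
      (∫ t in (π + ε)..(2*π - ε), 1 / (Real.sin t * (1 + b * Real.sin t))) =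
    -((∫ t in ε..(π - ε), b / (1 + b * Real.sin t)) +
      (∫ t in (π + ε)..(2*π - ε), b / (1 + b * Real.sin t))) := by
  obtain ⟨hε0, hε2⟩ := hε
  have hpi := Real.pi_pos
  -- sin positive on first interval, negative on second
  have hsin1 : ∀ t ∈ Icc ε (π - ε), Real.sin t ≠ 0 := by
    intro t ht
    exact (Real.sin_pos_of_pos_of_lt_pi (by linarith [ht.1]) (by linarith [ht.2])).ne'
  have hsin2 : ∀ t ∈ Icc (π + ε) (2*π - ε), Real.sin t ≠ 0 := by
    intro t ht
    have h1 : 0 < Real.sin (t - π) :=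
      Real.sin_pos_of_pos_of_lt_pi (by linarith [ht.1]) (by linarith [ht.2])
    rw [Real.sin_sub_pi] at h1
    linarith
  have huIcc1 : uIcc ε (π - ε) = Icc ε (π - ε) := uIcc_of_le (by linarith)
  have huIcc2 : uIcc (π + ε) (2*π - ε) = Icc (π + ε) (2*π - ε) := uIcc_of_le (by linarith)
  -- integrability of 1/sin on each interval
  have hint1 : IntervalIntegrable (fun t => 1 / Real.sin t) MeasureTheory.volume ε (π - ε) := by
    apply ContinuousOn.intervalIntegrable
    rw [huIcc1]
    exact continuousOn_const.div Real.continuous_sin.continuousOn hsin1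
  have hint2 : IntervalIntegrable (fun t => 1 / Real.sin t) MeasureTheory.volume
      (π + ε) (2*π - ε) := by
    apply ContinuousOn.intervalIntegrable
    rw [huIcc2]
    exact continuousOn_const.div Real.continuous_sin.continuousOn hsin2
  have hg := (cont_g hb)
  -- split both integrals
  have split1 : ∫ t in ε..(π - ε), 1 / (Real.sin t * (1 + b * Real.sin t))
      = (∫ t in ε..(π - ε), 1 / Real.sin t) - ∫ t in ε..(π - ε), b / (1 + b * Real.sin t) := by
    rw [← intervalIntegral.integral_sub hint1 (hg.intervalIntegrable _ _)]
    apply intervalIntegral.integral_congr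
    intro t ht
    rw [huIcc1] at ht
    exact partial_frac hb (hsin1 t ht)
  have split2 : ∫ t in (π + ε)..(2*π - ε), 1 / (Real.sin t * (1 + b * Real.sin t))
      = (∫ t in (π + ε)..(2*π - ε), 1 / Real.sin t)
        - ∫ t in (π + ε)..(2*π - ε), b / (1 + b * Real.sin t) := by
    rw [← intervalIntegral.integral_sub hint2 (hg.intervalIntegrable _ _)]
    apply intervalIntegral.integral_congr
    intro t ht
    rw [huIcc2] at ht
    exact partial_frac hb (hsin2 t ht)
  -- reflection: the csc parts cancel
  have refl : ∀ t : ℝ, (1:ℝ) / Real.sin t = -((fun u => 1 / Real.sin u) (2*π - t)) := by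
    intro t
    have : Real.sin (2*π - t) = -Real.sin t := by
      rw [show 2*π - t = -t + 2*π by ring, Real.sin_periodic (-t), Real.sin_neg]
    simp only [this]
    rw [div_neg, neg_neg]
  have cancel : ∫ t in (π + ε)..(2*π - ε), 1 / Real.sin t
      = -∫ t in ε..(π - ε), 1 / Real.sin t := by
    rw [intervalIntegral.integral_congr (g := fun t => -((fun u => 1 / Real.sin u) (2*π - t)))
      (fun t _ => refl t)]
    rw [intervalIntegral.integral_neg]
    rw [intervalIntegral.integral_comp_sub_left (fun u => 1 / Real.sin u) (2*π)]
    congr 1 <;> ring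
  rw [split1, split2, cancel]
  ring

end maincomp


lemma tendsto_G {b : ℝ} (hb : |b| < 1) :
    Tendsto (fun ε : ℝ =>
      -((∫ t in ε..(π - ε), b / (1 + b * Real.sin t)) +
        (∫ t in (π + ε)..(2*π - ε), b / (1 + b * Real.sin t))))
      (nhdsWithin 0 (Ioi 0))
      (nhds (-(∫ t in (0:ℝ)..(2*π), b / (1 + b * Real.sin t)))) := by
  have hgcont := cont_g hb
  have hΦcont : Continuous (fun x => ∫ t in (0:ℝ)..x, b / (1 + b * Real.sin t)) :=
    intervalIntegral.continuous_primitive (fun a b => hgcont.intervalIntegrable a b) _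
  have hGsub : ∀ x y : ℝ, (∫ t in x..y, b / (1 + b * Real.sin t))
      = (∫ t in (0:ℝ)..y, b / (1 + b * Real.sin t))
        - (∫ t in (0:ℝ)..x, b / (1 + b * Real.sin t)) := fun x y =>
    (intervalIntegral.integral_interval_sub_left (hgcont.intervalIntegrable _ _)
      (hgcont.intervalIntegrable _ _)).symm
  have hT : Tendsto (fun ε : ℝ =>
      -(((∫ t in (0:ℝ)..(π - ε), b / (1 + b * Real.sin t))
          - (∫ t in (0:ℝ)..ε, b / (1 + b * Real.sin t))) +
        ((∫ t in (0:ℝ)..(2*π - ε), b / (1 + b * Real.sin t))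
          - (∫ t in (0:ℝ)..(π + ε), b / (1 + b * Real.sin t)))))
      (nhdsWithin 0 (Ioi 0))
      (nhds (-(∫ t in (0:ℝ)..(2*π), b / (1 + b * Real.sin t)))) := by
    have hcont : Continuous (fun ε : ℝ =>
      -(((∫ t in (0:ℝ)..(π - ε), b / (1 + b * Real.sin t))
          - (∫ t in (0:ℝ)..ε, b / (1 + b * Real.sin t))) +
        ((∫ t in (0:ℝ)..(2*π - ε), b / (1 + b * Real.sin t))
          - (∫ t in (0:ℝ)..(π + ε), b / (1 + b * Real.sin t))))) := by
      have c1 : Continuous (fun ε : ℝ => ∫ t in (0:ℝ)..(π - ε), b / (1 + b * Real.sin t)) :=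
        hΦcont.comp (continuous_const.sub continuous_id)
      have c2 : Continuous (fun ε : ℝ => ∫ t in (0:ℝ)..ε, b / (1 + b * Real.sin t)) := hΦcont
      have c3 : Continuous (fun ε : ℝ => ∫ t in (0:ℝ)..(2*π - ε), b / (1 + b * Real.sin t)) :=
        hΦcont.comp (continuous_const.sub continuous_id)
      have c4 : Continuous (fun ε : ℝ => ∫ t in (0:ℝ)..(π + ε), b / (1 + b * Real.sin t)) :=
        hΦcont.comp (continuous_const.add continuous_id)
      exact ((c1.sub c2).add (c3.sub c4)).neg
    have h0 := hcont.tendsto 0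
    simp only [sub_zero, add_zero, intervalIntegral.integral_same] at h0
    have heq : -((∫ t in (0:ℝ)..π, b / (1 + b * Real.sin t))
        + ((∫ t in (0:ℝ)..(2*π), b / (1 + b * Real.sin t))
          - (∫ t in (0:ℝ)..π, b / (1 + b * Real.sin t))))
        = -(∫ t in (0:ℝ)..(2*π), b / (1 + b * Real.sin t)) := by ring
    rw [heq] at h0
    exact h0.mono_left nhdsWithin_le_nhds
  exact hT.congr (fun ε => by rw [← hGsub, ← hGsub])

theorem mu_of_f_b_surjective :
    ∀ r : ℝ, ∃ b : ℝ, b ∈ Ioo (-1 : ℝ) 1 ∧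
      Tendsto
        (fun ε : ℝ =>
          (∫ t in ε..(π - ε), 1 / (Real.sin t * (1 + b * Real.sin t))) +
            ∫ t in (π + ε)..(2 * π - ε), 1 / (Real.sin t * (1 + b * Real.sin t)))
        (nhdsWithin 0 (Ioi 0)) (nhds r) := by
  intro r
  have hpi := Real.pi_pos
  set q := Real.sqrt (4*π^2 + r^2) with hqdef
  have hqsqpos : (0:ℝ) < 4*π^2 + r^2 := by positivity
  have hq : 0 < q := Real.sqrt_pos.mpr hqsqpos
  have hq2 : q^2 = 4*π^2 + r^2 := Real.sq_sqrt hqsqpos.le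
  have hb : |(-r / q)| < 1 := by
    rw [abs_div, abs_neg, abs_of_pos hq, div_lt_one hq]
    have h1 : |r| = Real.sqrt (r^2) := (Real.sqrt_sq_eq_abs r).symm
    have h2 : q = Real.sqrt (q^2) := (Real.sqrt_sq hq.le).symm
    rw [h1, h2]
    apply Real.sqrt_lt_sqrt (sq_nonneg r)
    rw [hq2]; nlinarith
  refine ⟨-r / q, abs_lt.mp hb, ?_⟩
  have hc : Real.sqrt (1 - (-r / q)^2) = 2*π/q := by
    have h1 : 1 - (-r / q)^2 = (2*π/q)^2 := by
      field_simp
      linear_combination hq2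
    rw [h1, Real.sqrt_sq (by positivity)]
  have hval : -(∫ t in (0:ℝ)..(2*π), (-r / q) / (1 + (-r / q) * Real.sin t)) = r := by
    rw [integral_g hb, hc]
    field_simp
  have hlim := tendsto_G hb
  rw [hval] at hlim
  apply hlim.congr'
  filter_upwards [Ioo_mem_nhdsGT_of_mem (by constructor <;> [rfl; positivity] :
    (0:ℝ) ∈ Ico 0 (π/2))] with ε hε
  exact (sum_eq hb hε).symm
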